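/- arXiv:2501.03486 — 2 statements merged into one kernel-verified Lean document; each statement's English description precedes it below -/
import Mathlib

section
/- The suboptimality gap between the RLHF-optimal policy and the optimal-prompter policy satisfies J(π*) − J(π̃_{ρ*}) ≤ r_max·Σ_x P(x)·d_TV(π*(·|x), π_F(·|x)) + r_max·Σ_x P(x)·Σ_{x'} ρ_sft(x'|x)·d_TV(π_F(·|x), π_F(·|x')) − λ·Σ_x P(x)·KL(ρ*(·|x) ‖ ρ_sft(·|x)). -/
lemma tv_bound' {Y : Type*} [Fintype Y] (p q rf : Y → ℝ) (rmax : ℝ)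
    (hpq : ∑ y, p y = ∑ y, q y) (hr0 : ∀ y, 0 ≤ rf y) (hr1 : ∀ y, rf y ≤ rmax) :
    ∑ y, (p y - q y) * rf y ≤ rmax * ((1/2) * ∑ y, |p y - q y|) := by
  have h1 : ∀ y, (p y - q y) * rf y ≤ rmax * max (p y - q y) 0 := by
    intro y
    rcases le_or_gt (p y - q y) 0 with h | h
    · rw [max_eq_right h, mul_zero]
      exact mul_nonpos_of_nonpos_of_nonneg h (hr0 y)
    · rw [max_eq_left h.le]
      nlinarith [hr1 y]
  have hsum0 : ∑ y, (p y - q y) = 0 := by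
    rw [Finset.sum_sub_distrib, hpq, sub_self]
  calc ∑ y, (p y - q y) * rf y ≤ ∑ y, rmax * max (p y - q y) 0 :=
        Finset.sum_le_sum fun y _ => h1 y
    _ = rmax * ∑ y, max (p y - q y) 0 := by rw [Finset.mul_sum]
    _ = rmax * ((1/2) * ∑ y, |p y - q y|) := by
        congr 1
        have hm : ∀ a : ℝ, max a 0 = (a + |a|) / 2 := by
          intro a
          rcases le_total a 0 with h | h
          · rw [max_eq_right h, abs_of_nonpos h]; ring
          · rw [max_eq_left h, abs_of_nonneg h]; ring
        calc ∑ y, max (p y - q y) 0 = ∑ y, ((p y - q y) + |p y - q y|) / 2 := by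
              simp only [hm]
          _ = ((∑ y, (p y - q y)) + ∑ y, |p y - q y|) / 2 := by
              rw [← Finset.sum_div, Finset.sum_add_distrib]
          _ = (1/2) * ∑ y, |p y - q y| := by rw [hsum0]; ring

/-- Suboptimality gap bound:
J(π*) − J(π̃_{ρ*}) ≤ r_max·E_x[d_TV(π*(·|x), π_F(·|x))]
 + r_max·E_x E_{x'∼ρ_sft}[d_TV(π_F(·|x), π_F(·|x'))]
 − λ·E_x[KL(ρ*(·|x) ‖ ρ_sft(·|x))]. -/
theorem alignpro_suboptimality_bound
    {X Y : Type*} [Fintype X] [Fintype Y] [Nonempty X] [Nonempty Y]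
    (rmax : ℝ)
    (r : X → Y → ℝ) (hr : ∀ x y, 0 ≤ r x y ∧ r x y ≤ rmax)
    (piF : X → Y → ℝ) (hpiF0 : ∀ x y, 0 ≤ piF x y) (hpiF1 : ∀ x, ∑ y, piF x y = 1)
    (rhosft : X → X → ℝ) (hrho0 : ∀ x x', 0 < rhosft x x')
    (hrho1 : ∀ x, ∑ x', rhosft x x' = 1)
    (lam : ℝ) (hlam : 0 < lam) (beta : ℝ) (hbeta : 0 < beta)
    (P : X → ℝ) (hP0 : ∀ x, 0 ≤ P x) (hP1 : ∑ x, P x = 1)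
    (R : X → X → ℝ) (hR : ∀ x x', R x x' = ∑ y, piF x' y * r x y)
    (Z : X → ℝ) (hZ : ∀ x, Z x = ∑ x', rhosft x x' * Real.exp (R x x' / lam))
    (rhostar : X → X → ℝ)
    (hrhostar : ∀ x x', rhostar x x' = rhosft x x' * Real.exp (R x x' / lam) / Z x)
    (Zstar : X → ℝ) (hZstar : ∀ x, Zstar x = ∑ y, piF x y * Real.exp (r x y / beta))
    (pistar : X → Y → ℝ)
    (hpistar : ∀ x y, pistar x y = piF x y * Real.exp (r x y / beta) / Zstar x)
    (pitil : X → Y → ℝ)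
    (hpitil : ∀ x y, pitil x y = ∑ x', rhostar x x' * piF x' y) :
    (∑ x, P x * ∑ y, pistar x y * r x y) - (∑ x, P x * ∑ y, pitil x y * r x y)
      ≤ rmax * ∑ x, P x * ((1 / 2) * ∑ y, |pistar x y - piF x y|)
        + rmax * ∑ x, P x * ∑ x', rhosft x x' * ((1 / 2) * ∑ y, |piF x y - piF x' y|)
        - lam * ∑ x, P x * ∑ x', rhostar x x' * Real.log (rhostar x x' / rhosft x x') := by
  classical
  obtain ⟨x₀⟩ := (inferInstance : Nonempty X)
  obtain ⟨y₀⟩ := (inferInstance : Nonempty Y)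
  have hrmax : 0 ≤ rmax := le_trans (hr x₀ y₀).1 (hr x₀ y₀).2
  -- positivity of Z
  have hZpos : ∀ x, 0 < Z x := by
    intro x
    rw [hZ]
    exact Finset.sum_pos (fun x' _ => mul_pos (hrho0 x x') (Real.exp_pos _))
      Finset.univ_nonempty
  -- rhostar sums to 1
  have hrsum : ∀ x, ∑ x', rhostar x x' = 1 := by
    intro x
    simp only [hrhostar]
    rw [← Finset.sum_div, ← hZ, div_self (hZpos x).ne']
  -- Zstar positive
  have hZstarpos : ∀ x, 0 < Zstar x := by
    intro x
    rw [hZstar]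
    have hex : ∃ y ∈ Finset.univ, 0 < piF x y * Real.exp (r x y / beta) := by
      by_contra hcon
      push_neg at hcon
      have : ∀ y, piF x y = 0 := by
        intro y
        have h := hcon y (Finset.mem_univ y)
        have h0 := hpiF0 x y
        nlinarith [Real.exp_pos (r x y / beta)]
      have h1 := hpiF1 x
      simp only [this, Finset.sum_const_zero] at h1
      norm_num at h1
    exact Finset.sum_pos' (fun y _ => mul_nonneg (hpiF0 x y) (Real.exp_pos _).le) hex
  -- pistar sums to 1
  have hpssum : ∀ x, ∑ y, pistar x y = 1 := by
    intro x
    simp only [hpistar]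
    rw [← Finset.sum_div, ← hZstar, div_self (hZstarpos x).ne']
  -- rewrite pitil reward
  have hpitilR : ∀ x, ∑ y, pitil x y * r x y = ∑ x', rhostar x x' * R x x' := by
    intro x
    simp only [hpitil, Finset.sum_mul]
    rw [Finset.sum_comm]
    refine Finset.sum_congr rfl fun x' _ => ?_
    rw [hR, Finset.mul_sum]
    refine Finset.sum_congr rfl fun y _ => by ring
  -- KL identity: lam * KL_x = ∑ rhostar * R - lam * log (Z x)
  have hKL : ∀ x, lam * ∑ x', rhostar x x' * Real.log (rhostar x x' / rhosft x x')
      = (∑ x', rhostar x x' * R x x') - lam * Real.log (Z x) := by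
    intro x
    have hlog : ∀ x', Real.log (rhostar x x' / rhosft x x') = R x x' / lam - Real.log (Z x) := by
      intro x'
      have : rhostar x x' / rhosft x x' = Real.exp (R x x' / lam) / Z x := by
        rw [hrhostar]
        field_simp [(hrho0 x x').ne']
      rw [this, Real.log_div (Real.exp_pos _).ne' (hZpos x).ne', Real.log_exp]
    simp only [hlog]
    calc lam * ∑ x', rhostar x x' * (R x x' / lam - Real.log (Z x))
        = ∑ x', (rhostar x x' * R x x' - lam * Real.log (Z x) * rhostar x x') := by
          rw [Finset.mul_sum]
          refine Finset.sum_congr rfl fun x' _ => ?_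
          field_simp
      _ = (∑ x', rhostar x x' * R x x') - lam * Real.log (Z x) * ∑ x', rhostar x x' := by
          rw [Finset.sum_sub_distrib, ← Finset.mul_sum]
      _ = _ := by rw [hrsum x]; ring
  -- Jensen: ∑ rhosft * R ≤ lam * log (Z x)
  have hJensen : ∀ x, ∑ x', rhosft x x' * R x x' ≤ lam * Real.log (Z x) := by
    intro x
    have hconv := convexOn_exp.map_sum_le (t := Finset.univ) (w := rhosft x)
      (p := fun x' => R x x' / lam) (fun i _ => (hrho0 x i).le) (hrho1 x)
      (fun i _ => Set.mem_univ _)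
    simp only [smul_eq_mul] at hconv
    rw [← hZ] at hconv
    have h1 : ∑ x', rhosft x x' * (R x x' / lam) ≤ Real.log (Z x) := by
      rw [← Real.exp_le_exp, Real.exp_log (hZpos x)]
      exact hconv
    calc ∑ x', rhosft x x' * R x x'
        = lam * ∑ x', rhosft x x' * (R x x' / lam) := by
          rw [Finset.mul_sum]
          refine Finset.sum_congr rfl fun x' _ => ?_
          field_simp
      _ ≤ lam * Real.log (Z x) := mul_le_mul_of_nonneg_left h1 hlam.le
  -- per-x bound
  have hmain : ∀ x,
      (∑ y, pistar x y * r x y) - (∑ y, pitil x y * r x y)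
      ≤ rmax * ((1 / 2) * ∑ y, |pistar x y - piF x y|)
        + rmax * (∑ x', rhosft x x' * ((1 / 2) * ∑ y, |piF x y - piF x' y|))
        - lam * ∑ x', rhostar x x' * Real.log (rhostar x x' / rhosft x x') := by
    intro x
    have hA : ∑ y, (pistar x y - piF x y) * r x y
        ≤ rmax * ((1/2) * ∑ y, |pistar x y - piF x y|) :=
      tv_bound' _ _ _ rmax (by rw [hpssum x, hpiF1 x]) (fun y => (hr x y).1)
        (fun y => (hr x y).2)
    have hB : ∀ x', R x x - R x x' ≤ rmax * ((1/2) * ∑ y, |piF x y - piF x' y|) := by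
      intro x'
      have := tv_bound' (piF x) (piF x') (r x) rmax (by rw [hpiF1 x, hpiF1 x'])
        (fun y => (hr x y).1) (fun y => (hr x y).2)
      calc R x x - R x x' = ∑ y, (piF x y - piF x' y) * r x y := by
            rw [hR, hR, ← Finset.sum_sub_distrib]
            exact Finset.sum_congr rfl fun y _ => by ring
        _ ≤ _ := this
    -- Gibbs: R x x - ∑ rhostar*R ≤ ∑ rhosft*(R x x - R x x') - lam*KL
    have hGibbs : R x x - ∑ x', rhostar x x' * R x x'
        ≤ (∑ x', rhosft x x' * (R x x - R x x'))
          - lam * ∑ x', rhostar x x' * Real.log (rhostar x x' / rhosft x x') := by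
      have h1 : ∑ x', rhosft x x' * (R x x - R x x')
          = R x x - ∑ x', rhosft x x' * R x x' := by
        simp only [mul_sub]
        rw [Finset.sum_sub_distrib, ← Finset.sum_mul, hrho1 x, one_mul]
      rw [h1, hKL x]
      have := hJensen x
      linarith
    have hB' : ∑ x', rhosft x x' * (R x x - R x x')
        ≤ rmax * (∑ x', rhosft x x' * ((1/2) * ∑ y, |piF x y - piF x' y|)) := by
      rw [Finset.mul_sum]
      refine Finset.sum_le_sum fun x' _ => ?_
      rw [show rmax * (rhosft x x' * ((1/2) * ∑ y, |piF x y - piF x' y|))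
          = rhosft x x' * (rmax * ((1/2) * ∑ y, |piF x y - piF x' y|)) by ring]
      exact mul_le_mul_of_nonneg_left (hB x') (hrho0 x x').le
    have hsplit : (∑ y, pistar x y * r x y) - (∑ y, pitil x y * r x y)
        = (∑ y, (pistar x y - piF x y) * r x y)
          + (R x x - ∑ x', rhostar x x' * R x x') := by
      rw [hpitilR x, hR x x]
      have h2 : ∑ y, (pistar x y - piF x y) * r x y
          = (∑ y, pistar x y * r x y) - ∑ y, piF x y * r x y := by
        rw [← Finset.sum_sub_distrib]
        exact Finset.sum_congr rfl fun y _ => by ring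
      rw [h2]
      ring
    rw [hsplit]
    linarith [hGibbs, hA, hB']
  -- combine
  calc (∑ x, P x * ∑ y, pistar x y * r x y) - (∑ x, P x * ∑ y, pitil x y * r x y)
      = ∑ x, P x * ((∑ y, pistar x y * r x y) - (∑ y, pitil x y * r x y)) := by
        rw [← Finset.sum_sub_distrib]
        exact Finset.sum_congr rfl fun x _ => (mul_sub _ _ _).symm
    _ ≤ ∑ x, P x * (rmax * ((1 / 2) * ∑ y, |pistar x y - piF x y|)
        + rmax * (∑ x', rhosft x x' * ((1 / 2) * ∑ y, |piF x y - piF x' y|))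
        - lam * ∑ x', rhostar x x' * Real.log (rhostar x x' / rhosft x x')) :=
        Finset.sum_le_sum fun x _ => mul_le_mul_of_nonneg_left (hmain x) (hP0 x)
    _ = rmax * ∑ x, P x * ((1 / 2) * ∑ y, |pistar x y - piF x y|)
        + rmax * ∑ x, P x * ∑ x', rhosft x x' * ((1 / 2) * ∑ y, |piF x y - piF x' y|)
        - lam * ∑ x, P x * ∑ x', rhostar x x' * Real.log (rhostar x x' / rhosft x x') := by
        rw [Finset.mul_sum, Finset.mul_sum, Finset.mul_sum,
          ← Finset.sum_add_distrib, ← Finset.sum_sub_distrib]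
        exact Finset.sum_congr rfl fun x _ => by ring
end

section
/- For every prompt x ∈ X, the term Δ2*(x) = Σ_y π_F(y|x)·r(x,y) − Σ_y π̃_{ρ*}(y|x)·r(x,y) satisfies Δ2*(x) ≤ r_max·Σ_{x'} ρ_sft(x'|x)·d_TV(π_F(·|x), π_F(·|x')) − λ·KL(ρ*(·|x) ‖ ρ_sft(·|x)), where π̃_{ρ*}(y|x) = Σ_{x'} ρ*(x'|x)·π_F(y|x'). -/
lemma tv_bound_aux {Y : Type*} [Fintype Y] (rmax : ℝ) (p q rr : Y → ℝ)
    (hr0 : ∀ y, 0 ≤ rr y) (hr1 : ∀ y, rr y ≤ rmax)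
    (hsum : ∑ y, p y = ∑ y, q y) :
    ∑ y, p y * rr y - ∑ y, q y * rr y ≤ rmax * (1/2 * ∑ y, |p y - q y|) := by
  have h : ∀ y ∈ Finset.univ, (p y - q y) * rr y ≤ ((p y - q y) + |p y - q y|)/2 * rmax := by
    intro y _
    rcases le_or_gt 0 (p y - q y) with h|h
    · rw [abs_of_nonneg h]; nlinarith [hr0 y, hr1 y]
    · rw [abs_of_neg h]; nlinarith [hr0 y, hr1 y]
  have hle := Finset.sum_le_sum h
  have e1 : ∑ y, (p y - q y) * rr y = ∑ y, p y * rr y - ∑ y, q y * rr y := by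
    rw [← Finset.sum_sub_distrib]; congr 1; ext y; ring
  have e2 : ∑ y, ((p y - q y) + |p y - q y|)/2 * rmax
      = ((∑ y, (p y - q y)) + ∑ y, |p y - q y|)/2 * rmax := by
    rw [← Finset.sum_mul, ← Finset.sum_div, Finset.sum_add_distrib]
  have e3 : ∑ y, (p y - q y) = 0 := by
    rw [Finset.sum_sub_distrib, hsum]; ring
  rw [e1, e2, e3] at hle
  linarith

/-- For every x,
Δ2*(x) = Σ_y π_F(y|x)·r(x,y) − Σ_y π̃_{ρ*}(y|x)·r(x,y)
       ≤ r_max·Σ_{x'} ρ_sft(x'|x)·d_TV(π_F(·|x), π_F(·|x'))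
         − λ·KL(ρ*(·|x) ‖ ρ_sft(·|x)). -/
theorem delta2star_bound
    {X Y : Type*} [Fintype X] [Fintype Y] [Nonempty X] [Nonempty Y]
    (rmax : ℝ)
    (r : X → Y → ℝ) (hr : ∀ x y, 0 ≤ r x y ∧ r x y ≤ rmax)
    (piF : X → Y → ℝ) (hpiF0 : ∀ x y, 0 ≤ piF x y) (hpiF1 : ∀ x, ∑ y, piF x y = 1)
    (rhosft : X → X → ℝ) (hrho0 : ∀ x x', 0 < rhosft x x')
    (hrho1 : ∀ x, ∑ x', rhosft x x' = 1)
    (lam : ℝ) (hlam : 0 < lam)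
    (R : X → X → ℝ) (hR : ∀ x x', R x x' = ∑ y, piF x' y * r x y)
    (Z : X → ℝ) (hZ : ∀ x, Z x = ∑ x', rhosft x x' * Real.exp (R x x' / lam))
    (rhostar : X → X → ℝ)
    (hrhostar : ∀ x x', rhostar x x' = rhosft x x' * Real.exp (R x x' / lam) / Z x)
    (pitil : X → Y → ℝ)
    (hpitil : ∀ x y, pitil x y = ∑ x', rhostar x x' * piF x' y)
    (x : X) :
    ∑ y, piF x y * r x y - ∑ y, pitil x y * r x y
      ≤ rmax * ∑ x', rhosft x x' * ((1 / 2) * ∑ y, |piF x y - piF x' y|)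
        - lam * ∑ x', rhostar x x' * Real.log (rhostar x x' / rhosft x x') := by
  have hZpos : 0 < Z x := by
    rw [hZ]
    exact Finset.sum_pos (fun x' _ => mul_pos (hrho0 x x') (Real.exp_pos _))
      Finset.univ_nonempty
  -- ρ* sums to 1
  have hstar1 : ∑ x', rhostar x x' = 1 := by
    have : ∑ x', rhostar x x' = (∑ x', rhosft x x' * Real.exp (R x x' / lam)) / Z x := by
      rw [Finset.sum_div]; exact Finset.sum_congr rfl fun x' _ => hrhostar x x'
    rw [this, ← hZ, div_self hZpos.ne']
  -- π̃ reward = Σ ρ* R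
  have hA : ∑ y, pitil x y * r x y = ∑ x', rhostar x x' * R x x' := by
    simp only [hpitil, hR, Finset.sum_mul, Finset.mul_sum]
    rw [Finset.sum_comm]
    exact Finset.sum_congr rfl fun x' _ => Finset.sum_congr rfl fun y _ => by ring
  -- KL identity: λ Σ ρ* log(ρ*/ρ_sft) = Σ ρ* R − λ log Z
  have hlog : ∀ x', Real.log (rhostar x x' / rhosft x x') = R x x' / lam - Real.log (Z x) := by
    intro x'
    have : rhostar x x' / rhosft x x' = Real.exp (R x x' / lam) / Z x := by
      rw [hrhostar]; field_simp [hZpos.ne', (hrho0 x x').ne']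
    rw [this, Real.log_div (Real.exp_pos _).ne' hZpos.ne', Real.log_exp]
  have hKL : lam * ∑ x', rhostar x x' * Real.log (rhostar x x' / rhosft x x')
      = ∑ x', rhostar x x' * R x x' - lam * Real.log (Z x) := by
    have : ∑ x', rhostar x x' * Real.log (rhostar x x' / rhosft x x')
        = ∑ x', (rhostar x x' * (R x x' / lam) - rhostar x x' * Real.log (Z x)) := by
      exact Finset.sum_congr rfl fun x' _ => by rw [hlog]; ring
    have e : ∑ x', rhostar x x' * (R x x' / lam) = (∑ x', rhostar x x' * R x x') / lam := by
      rw [Finset.sum_div]; exact Finset.sum_congr rfl fun x' _ => by ring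
    rw [this, Finset.sum_sub_distrib, ← Finset.sum_mul, hstar1, one_mul, mul_sub, e,
      mul_div_cancel₀ _ hlam.ne']
  -- Jensen: Σ ρ_sft R ≤ λ log Z
  have hJensen : ∑ x', rhosft x x' * R x x' ≤ lam * Real.log (Z x) := by
    have hconv := convexOn_exp
    have hj := hconv.map_sum_le (t := Finset.univ) (w := fun x' => rhosft x x')
      (p := fun x' => R x x' / lam) (fun x' _ => (hrho0 x x').le) (hrho1 x)
      (fun x' _ => Set.mem_univ _)
    simp only [smul_eq_mul] at hj
    have hZeq : Z x = ∑ x', rhosft x x' * Real.exp (R x x' / lam) := hZ x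
    rw [← hZeq] at hj
    have hle : ∑ x', rhosft x x' * (R x x' / lam) ≤ Real.log (Z x) := by
      rw [← Real.log_exp (∑ x', rhosft x x' * (R x x' / lam))]
      exact Real.log_le_log (Real.exp_pos _) hj
    have : ∑ x', rhosft x x' * (R x x' / lam) = (∑ x', rhosft x x' * R x x') / lam := by
      rw [Finset.sum_div]; exact Finset.sum_congr rfl fun x' _ => by ring
    rw [this] at hle
    calc ∑ x', rhosft x x' * R x x' = lam * ((∑ x', rhosft x x' * R x x') / lam) := by
          field_simp
      _ ≤ lam * Real.log (Z x) := by
          exact mul_le_mul_of_nonneg_left hle hlam.le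
  -- TV bound pointwise
  have hTV : ∀ x', R x x - R x x' ≤ rmax * ((1/2) * ∑ y, |piF x y - piF x' y|) := by
    intro x'
    rw [hR, hR]
    exact tv_bound_aux rmax (piF x) (piF x') (r x) (fun y => (hr x y).1)
      (fun y => (hr x y).2) (by rw [hpiF1, hpiF1])
  -- combine
  have hfirst : ∑ y, piF x y * r x y = R x x := (hR x x).symm
  have hRxx : R x x = ∑ x', rhosft x x' * R x x := by
    rw [← Finset.sum_mul, hrho1, one_mul]
  have hTVsum : ∑ x', rhosft x x' * (R x x - R x x')
      ≤ rmax * ∑ x', rhosft x x' * ((1/2) * ∑ y, |piF x y - piF x' y|) := by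
    rw [Finset.mul_sum]
    refine Finset.sum_le_sum fun x' _ => ?_
    rw [show rmax * (rhosft x x' * ((1/2) * ∑ y, |piF x y - piF x' y|))
        = rhosft x x' * (rmax * ((1/2) * ∑ y, |piF x y - piF x' y|)) by ring]
    exact mul_le_mul_of_nonneg_left (hTV x') (hrho0 x x').le
  have hsplit : ∑ x', rhosft x x' * (R x x - R x x')
      = R x x - ∑ x', rhosft x x' * R x x' := by
    calc ∑ x', rhosft x x' * (R x x - R x x')
        = ∑ x', (rhosft x x' * R x x - rhosft x x' * R x x') :=
          Finset.sum_congr rfl fun x' _ => by ring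
      _ = (∑ x', rhosft x x' * R x x) - ∑ x', rhosft x x' * R x x' :=
          Finset.sum_sub_distrib _ _
      _ = R x x - ∑ x', rhosft x x' * R x x' := by rw [← hRxx]
  rw [hfirst, hA]
  linarith [hTVsum, hsplit, hJensen, hKL]
end
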